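/- Let I_1, …, I_m ⊆ ℕ_0 be nonempty intervals with I_j ≪ I_{j+1} for each j (meaning min I_{j+1} − max I_j ≥ 2), and let x_j ∈ R(P_{I_j}) for each j. Then 2‖Σ_{j=1}^m x_j‖_J² ≥ Σ_{j=1}^m ‖x_j‖_J². -/

import Mathlib

open Filter Topology

/-- Composition `φ_n^m = φ_{m-1} ∘ ⋯ ∘ φ_n : X n →L X m` (junk value for `m < n`). -/
noncomputable def phiTo {X : ℕ → Type*} [∀ n, NormedAddCommGroup (X n)]
    [∀ n, NormedSpace ℝ (X n)] (φ : ∀ n, X n →L[ℝ] X (n + 1)) (n : ℕ) :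
    (m : ℕ) → X n →L[ℝ] X m
  | 0 => 0
  | m + 1 =>
    if h : m + 1 = n then by rw [h]; exact ContinuousLinearMap.id ℝ (X n)
    else (φ m).comp (phiTo φ n m)

open Classical in
/-- `σ(x,S)²`: the sum over consecutive pairs `p < q` of `S` of `‖φ_p^q(x_p) - x_q‖²`. -/
noncomputable def sigma2 {X : ℕ → Type*} [∀ n, NormedAddCommGroup (X n)]
    [∀ n, NormedSpace ℝ (X n)] (φ : ∀ n, X n →L[ℝ] X (n + 1))
    (x : ∀ n, X n) (S : Finset ℕ) : ℝ :=
  ∑ p ∈ S, ∑ q ∈ S,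
    if p < q ∧ ∀ r ∈ S, ¬(p < r ∧ r < q) then ‖phiTo φ p q (x p) - x q‖ ^ 2 else 0

noncomputable def sigmaJ {X : ℕ → Type*} [∀ n, NormedAddCommGroup (X n)]
    [∀ n, NormedSpace ℝ (X n)] (φ : ∀ n, X n →L[ℝ] X (n + 1))
    (x : ∀ n, X n) (S : Finset ℕ) : ℝ :=
  Real.sqrt (sigma2 φ x S)

/-- `ρ(x,S)² = σ(x,S)² + ‖x_{max S}‖²`. -/
noncomputable def rho2 {X : ℕ → Type*} [∀ n, NormedAddCommGroup (X n)]
    [∀ n, NormedSpace ℝ (X n)] (φ : ∀ n, X n →L[ℝ] X (n + 1))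
    (x : ∀ n, X n) (S : Finset ℕ) (hS : S.Nonempty) : ℝ :=
  sigma2 φ x S + ‖x (S.max' hS)‖ ^ 2

noncomputable def rhoJ {X : ℕ → Type*} [∀ n, NormedAddCommGroup (X n)]
    [∀ n, NormedSpace ℝ (X n)] (φ : ∀ n, X n →L[ℝ] X (n + 1))
    (x : ∀ n, X n) (S : Finset ℕ) (hS : S.Nonempty) : ℝ :=
  Real.sqrt (rho2 φ x S hS)

/-- The set of values `ρ(x,S)` over finite nonempty `S ⊆ ℕ`. -/
def rhoSet {X : ℕ → Type*} [∀ n, NormedAddCommGroup (X n)]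
    [∀ n, NormedSpace ℝ (X n)] (φ : ∀ n, X n →L[ℝ] X (n + 1))
    (x : ∀ n, X n) : Set ℝ :=
  {r : ℝ | ∃ (S : Finset ℕ) (hS : S.Nonempty), r = rhoJ φ x S hS}

/-- Membership in `Ĵ(Φ)`: `sup_S ρ(x,S) < ∞`. -/
def memJhat {X : ℕ → Type*} [∀ n, NormedAddCommGroup (X n)]
    [∀ n, NormedSpace ℝ (X n)] (φ : ∀ n, X n →L[ℝ] X (n + 1))
    (x : ∀ n, X n) : Prop :=
  BddAbove (rhoSet φ x)

/-- The norm `‖x‖_J = (1/√2) sup_S ρ(x,S)`. -/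
noncomputable def normJ {X : ℕ → Type*} [∀ n, NormedAddCommGroup (X n)]
    [∀ n, NormedSpace ℝ (X n)] (φ : ∀ n, X n →L[ℝ] X (n + 1))
    (x : ∀ n, X n) : ℝ :=
  (Real.sqrt 2)⁻¹ * sSup (rhoSet φ x)

/-- Membership in `J(Φ)`: member of `Ĵ(Φ)` with `‖x_n‖ → 0`. -/
def memJ {X : ℕ → Type*} [∀ n, NormedAddCommGroup (X n)]
    [∀ n, NormedSpace ℝ (X n)] (φ : ∀ n, X n →L[ℝ] X (n + 1))
    (x : ∀ n, X n) : Prop :=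
  memJhat φ x ∧ Tendsto (fun n => ‖x n‖) atTop (𝓝 0)

open Classical in
/-- The coordinate restriction `P_I`. -/
noncomputable def restrictSeq {X : ℕ → Type*} [∀ n, NormedAddCommGroup (X n)]
    (I : Set ℕ) (x : ∀ n, X n) : ∀ n, X n :=
  fun n => if n ∈ I then x n else 0

/-- The stepping map `Q_α`. -/
noncomputable def stepSeq {X : ℕ → Type*} [∀ n, NormedAddCommGroup (X n)]
    [∀ n, NormedSpace ℝ (X n)] (φ : ∀ n, X n →L[ℝ] X (n + 1))
    (α : ℕ → ℕ) (x : ∀ n, X n) : ∀ n, X n :=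
  fun n => phiTo φ (α n) n (x (α n))

section Lemmas
variable {X : ℕ → Type*} [∀ n, NormedAddCommGroup (X n)] [∀ n, NormedSpace ℝ (X n)]
  (φ : ∀ n, X n →L[ℝ] X (n + 1))

lemma phiTo_norm_le (hφ : ∀ n, ‖φ n‖ ≤ 1) (n : ℕ) : ∀ (m : ℕ) (v : X n), ‖phiTo φ n m v‖ ≤ ‖v‖ := by
  intro m
  induction m with
  | zero => intro v; simp [phiTo]
  | succ k ih =>
    intro v
    rw [phiTo]
    split_ifs with h
    · subst h
      simp
    · calc ‖(φ k) (phiTo φ n k v)‖ ≤ ‖φ k‖ * ‖phiTo φ n k v‖ := (φ k).le_opNorm _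
        _ ≤ 1 * ‖v‖ := by
            apply mul_le_mul (hφ k) (ih v) (norm_nonneg _) zero_le_one
        _ = ‖v‖ := one_mul _

lemma sigma2_nonneg (x : ∀ n, X n) (S : Finset ℕ) : 0 ≤ sigma2 φ x S := by
  apply Finset.sum_nonneg; intro p _; apply Finset.sum_nonneg; intro q _
  split_ifs <;> positivity

lemma sigma2_congr {x y : ∀ n, X n} (S : Finset ℕ) (h : ∀ n ∈ S, x n = y n) :
    sigma2 φ x S = sigma2 φ y S := by
  unfold sigma2
  refine Finset.sum_congr rfl fun p hp => Finset.sum_congr rfl fun q hq => ?_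
  rw [h p hp, h q hq]

lemma sigma2_zero_on {x : ∀ n, X n} (S : Finset ℕ) (h : ∀ n ∈ S, x n = 0) :
    sigma2 φ x S = 0 := by
  unfold sigma2
  apply Finset.sum_eq_zero; intro p hp; apply Finset.sum_eq_zero; intro q hq
  split_ifs with hc
  · rw [h p hp, h q hq]; simp
  · rfl

lemma sigma2_singleton (x : ∀ n, X n) (a : ℕ) : sigma2 φ x {a} = 0 := by
  unfold sigma2
  simp

end Lemmas
section Lemmas2
variable {X : ℕ → Type*} [∀ n, NormedAddCommGroup (X n)] [∀ n, NormedSpace ℝ (X n)]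
  (φ : ∀ n, X n →L[ℝ] X (n + 1))

open Classical in
lemma sigma2_union (x : ∀ n, X n) (S₁ S₂ : Finset ℕ) (h₁ : S₁.Nonempty) (h₂ : S₂.Nonempty)
    (hlt : ∀ a ∈ S₁, ∀ b ∈ S₂, a < b) :
    sigma2 φ x (S₁ ∪ S₂) = sigma2 φ x S₁ + sigma2 φ x S₂ +
      ‖phiTo φ (S₁.max' h₁) (S₂.min' h₂) (x (S₁.max' h₁)) - x (S₂.min' h₂)‖ ^ 2 := by
  classical
  have hdisj : Disjoint S₁ S₂ := by
    rw [Finset.disjoint_left]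
    intro a ha ha2
    exact lt_irrefl a (hlt a ha a ha2)
  unfold sigma2
  rw [Finset.sum_union hdisj]
  simp only [Finset.sum_union hdisj]
  rw [Finset.sum_add_distrib, Finset.sum_add_distrib]
  have D11 : (∑ p ∈ S₁, ∑ q ∈ S₁,
      if p < q ∧ ∀ r ∈ S₁ ∪ S₂, ¬(p < r ∧ r < q) then ‖phiTo φ p q (x p) - x q‖ ^ 2 else 0)
      = ∑ p ∈ S₁, ∑ q ∈ S₁,
      if p < q ∧ ∀ r ∈ S₁, ¬(p < r ∧ r < q) then ‖phiTo φ p q (x p) - x q‖ ^ 2 else 0 := by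
    refine Finset.sum_congr rfl fun p hp => Finset.sum_congr rfl fun q hq => ?_
    refine if_congr (and_congr_right fun hpq => ?_) rfl rfl
    constructor
    · intro h r hr; exact h r (Finset.mem_union_left _ hr)
    · intro h r hr
      rcases Finset.mem_union.mp hr with hr1 | hr2
      · exact h r hr1
      · intro ⟨_, hrq⟩; exact absurd (hlt q hq r hr2) (lt_asymm hrq)
  have D22 : (∑ p ∈ S₂, ∑ q ∈ S₂,
      if p < q ∧ ∀ r ∈ S₁ ∪ S₂, ¬(p < r ∧ r < q) then ‖phiTo φ p q (x p) - x q‖ ^ 2 else 0)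
      = ∑ p ∈ S₂, ∑ q ∈ S₂,
      if p < q ∧ ∀ r ∈ S₂, ¬(p < r ∧ r < q) then ‖phiTo φ p q (x p) - x q‖ ^ 2 else 0 := by
    refine Finset.sum_congr rfl fun p hp => Finset.sum_congr rfl fun q hq => ?_
    refine if_congr (and_congr_right fun hpq => ?_) rfl rfl
    constructor
    · intro h r hr; exact h r (Finset.mem_union_right _ hr)
    · intro h r hr
      rcases Finset.mem_union.mp hr with hr1 | hr2
      · intro ⟨hpr, _⟩; exact absurd (hlt r hr1 p hp) (lt_asymm hpr)
      · exact h r hr2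
  have D21 : (∑ p ∈ S₂, ∑ q ∈ S₁,
      if p < q ∧ ∀ r ∈ S₁ ∪ S₂, ¬(p < r ∧ r < q) then ‖phiTo φ p q (x p) - x q‖ ^ 2 else 0) = 0 := by
    apply Finset.sum_eq_zero; intro p hp; apply Finset.sum_eq_zero; intro q hq
    rw [if_neg]
    intro ⟨hpq, _⟩
    exact absurd (hlt q hq p hp) (lt_asymm hpq)
  have D12 : (∑ p ∈ S₁, ∑ q ∈ S₂,
      if p < q ∧ ∀ r ∈ S₁ ∪ S₂, ¬(p < r ∧ r < q) then ‖phiTo φ p q (x p) - x q‖ ^ 2 else 0)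
      = ‖phiTo φ (S₁.max' h₁) (S₂.min' h₂) (x (S₁.max' h₁)) - x (S₂.min' h₂)‖ ^ 2 := by
    have key : ∀ p ∈ S₁, ∀ q ∈ S₂,
        ((p < q ∧ ∀ r ∈ S₁ ∪ S₂, ¬(p < r ∧ r < q)) ↔ (p = S₁.max' h₁ ∧ q = S₂.min' h₂)) := by
      intro p hp q hq
      constructor
      · rintro ⟨hpq, hno⟩
        constructor
        · by_contra hne
          have hlt' : p < S₁.max' h₁ := lt_of_le_of_ne (Finset.le_max' _ p hp) hne
          exact hno _ (Finset.mem_union_left _ (S₁.max'_mem h₁))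
            ⟨hlt', hlt _ (S₁.max'_mem h₁) q hq⟩
        · by_contra hne
          have hlt' : S₂.min' h₂ < q := lt_of_le_of_ne (Finset.min'_le _ q hq) (Ne.symm hne)
          exact hno _ (Finset.mem_union_right _ (S₂.min'_mem h₂))
            ⟨hlt p hp _ (S₂.min'_mem h₂), hlt'⟩
      · rintro ⟨rfl, rfl⟩
        refine ⟨hlt _ hp _ hq, fun r hr => ?_⟩
        rcases Finset.mem_union.mp hr with hr1 | hr2
        · intro ⟨hpr, _⟩; exact absurd (Finset.le_max' _ r hr1) (not_le.mpr hpr)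
        · intro ⟨_, hrq⟩; exact absurd (Finset.min'_le _ r hr2) (not_le.mpr hrq)
    rw [Finset.sum_congr rfl fun p hp => Finset.sum_congr rfl fun q hq =>
      if_congr (key p hp q hq) rfl rfl]
    rw [Finset.sum_eq_single (S₁.max' h₁)]
    · rw [Finset.sum_eq_single (S₂.min' h₂)]
      · rw [if_pos ⟨rfl, rfl⟩]
      · intro q _ hqne; rw [if_neg]; intro ⟨_, h⟩; exact hqne h
      · intro habs; exact absurd (S₂.min'_mem h₂) habs
    · intro p _ hpne; apply Finset.sum_eq_zero; intro q _; rw [if_neg]; intro ⟨h, _⟩; exact hpne h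
    · intro habs; exact absurd (S₁.max'_mem h₁) habs
  rw [D11, D22, D21, D12]
  ring
end Lemmas2
section Lemmas3
variable {X : ℕ → Type*} [∀ n, NormedAddCommGroup (X n)] [∀ n, NormedSpace ℝ (X n)]
  (φ : ∀ n, X n →L[ℝ] X (n + 1))

open Classical in
/-- the unsquared term function -/
noncomputable def tfun (x : ∀ n, X n) (S : Finset ℕ) (pq : ℕ × ℕ) : ℝ :=
  if pq.1 < pq.2 ∧ ∀ r ∈ S, ¬(pq.1 < r ∧ r < pq.2) then
    ‖phiTo φ pq.1 pq.2 (x pq.1) - x pq.2‖ else 0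

lemma tfun_nonneg (x : ∀ n, X n) (S : Finset ℕ) (pq : ℕ × ℕ) : 0 ≤ tfun φ x S pq := by
  unfold tfun; split_ifs <;> positivity

lemma sigma2_eq_sum_sq (x : ∀ n, X n) (S : Finset ℕ) :
    sigma2 φ x S = ∑ pq ∈ S ×ˢ S, (tfun φ x S pq) ^ 2 := by
  classical
  rw [Finset.sum_product]
  unfold sigma2 tfun
  refine Finset.sum_congr rfl fun p hp => Finset.sum_congr rfl fun q hq => ?_
  split_ifs <;> simp

lemma mink_aux {ι : Type*} (F : Finset ι) (w u v : ι → ℝ) (e c d : ℝ)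
    (hc : 0 ≤ c) (hd : 0 ≤ d)
    (hw : ∀ i ∈ F, |w i| ≤ u i + v i) (he : |e| ≤ c + d) :
    Real.sqrt (∑ i ∈ F, w i ^ 2 + e ^ 2) ≤
      Real.sqrt (∑ i ∈ F, u i ^ 2 + c ^ 2) + Real.sqrt (∑ i ∈ F, v i ^ 2 + d ^ 2) := by
  set A := Real.sqrt (∑ i ∈ F, u i ^ 2 + c ^ 2) with hA
  set B := Real.sqrt (∑ i ∈ F, v i ^ 2 + d ^ 2) with hB
  have hAnn : 0 ≤ A := Real.sqrt_nonneg _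
  have hBnn : 0 ≤ B := Real.sqrt_nonneg _
  have hA2 : A ^ 2 = ∑ i ∈ F, u i ^ 2 + c ^ 2 := by
    rw [hA, Real.sq_sqrt]; positivity
  have hB2 : B ^ 2 = ∑ i ∈ F, v i ^ 2 + d ^ 2 := by
    rw [hB, Real.sq_sqrt]; positivity
  set a := Real.sqrt (∑ i ∈ F, u i ^ 2) with ha'
  set b := Real.sqrt (∑ i ∈ F, v i ^ 2) with hb'
  have hann : 0 ≤ a := Real.sqrt_nonneg _
  have hbnn : 0 ≤ b := Real.sqrt_nonneg _
  have ha2 : a ^ 2 = ∑ i ∈ F, u i ^ 2 := Real.sq_sqrt (by positivity)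
  have hb2 : b ^ 2 = ∑ i ∈ F, v i ^ 2 := Real.sq_sqrt (by positivity)
  have hcs : ∑ i ∈ F, u i * v i ≤ a * b := Real.sum_mul_le_sqrt_mul_sqrt F u v
  have key : ∑ i ∈ F, u i * v i + c * d ≤ A * B := by
    have h2 : a * b + c * d ≤ A * B := by
      have hsq : (a * b + c * d) ^ 2 ≤ (A * B) ^ 2 := by
        have h3 : (A * B) ^ 2 = (a ^ 2 + c ^ 2) * (b ^ 2 + d ^ 2) := by
          rw [mul_pow, hA2, hB2, ha2, hb2]
        rw [h3]
        nlinarith [sq_nonneg (a * d - c * b), mul_nonneg hann hbnn, mul_nonneg hc hd]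
      have hab : 0 ≤ a * b + c * d := by positivity
      have hABnn : 0 ≤ A * B := by positivity
      nlinarith
    linarith
  have hbound : ∑ i ∈ F, w i ^ 2 + e ^ 2 ≤ (A + B) ^ 2 := by
    have h1 : ∑ i ∈ F, w i ^ 2 ≤ ∑ i ∈ F, (u i + v i) ^ 2 := by
      apply Finset.sum_le_sum
      intro i hi
      calc w i ^ 2 = |w i| ^ 2 := (sq_abs _).symm
        _ ≤ (u i + v i) ^ 2 := by
            apply pow_le_pow_left₀ (abs_nonneg _) (hw i hi)
    have h2 : e ^ 2 ≤ (c + d) ^ 2 := by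
      calc e ^ 2 = |e| ^ 2 := (sq_abs _).symm
        _ ≤ (c + d) ^ 2 := pow_le_pow_left₀ (abs_nonneg _) he 2
    have h3 : ∑ i ∈ F, (u i + v i) ^ 2
        = ∑ i ∈ F, u i ^ 2 + ∑ i ∈ F, v i ^ 2 + 2 * ∑ i ∈ F, u i * v i := by
      rw [Finset.mul_sum, ← Finset.sum_add_distrib, ← Finset.sum_add_distrib]
      apply Finset.sum_congr rfl; intro i _; ring
    nlinarith
  calc Real.sqrt (∑ i ∈ F, w i ^ 2 + e ^ 2) ≤ Real.sqrt ((A + B) ^ 2) :=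
        Real.sqrt_le_sqrt hbound
    _ = A + B := Real.sqrt_sq (by positivity)
end Lemmas3
section Lemmas4
variable {X : ℕ → Type*} [∀ n, NormedAddCommGroup (X n)] [∀ n, NormedSpace ℝ (X n)]
  (φ : ∀ n, X n →L[ℝ] X (n + 1))

lemma rho2_nonneg (x : ∀ n, X n) (S : Finset ℕ) (hS : S.Nonempty) :
    0 ≤ rho2 φ x S hS :=
  add_nonneg (sigma2_nonneg φ x S) (sq_nonneg _)

lemma rhoJ_nonneg (x : ∀ n, X n) (S : Finset ℕ) (hS : S.Nonempty) :
    0 ≤ rhoJ φ x S hS := Real.sqrt_nonneg _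

lemma rhoJ_add_le (x y : ∀ n, X n) (S : Finset ℕ) (hS : S.Nonempty) :
    rhoJ φ (fun n => x n + y n) S hS ≤ rhoJ φ x S hS + rhoJ φ y S hS := by
  unfold rhoJ rho2
  rw [sigma2_eq_sum_sq, sigma2_eq_sum_sq, sigma2_eq_sum_sq]
  apply mink_aux _ _ _ _ _ _ _ (norm_nonneg _) (norm_nonneg _)
  · intro pq _
    rw [abs_of_nonneg (tfun_nonneg _ _ _ _)]
    unfold tfun
    split_ifs with h
    · calc ‖phiTo φ pq.1 pq.2 (x pq.1 + y pq.1) - (x pq.2 + y pq.2)‖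
          = ‖(phiTo φ pq.1 pq.2 (x pq.1) - x pq.2) + (phiTo φ pq.1 pq.2 (y pq.1) - y pq.2)‖ := by
            rw [map_add]; congr 1; abel
      _ ≤ _ := norm_add_le _ _
    · simp
  · rw [abs_of_nonneg (norm_nonneg _)]
    exact norm_add_le _ _

lemma rhoJ_zero (S : Finset ℕ) (hS : S.Nonempty) :
    rhoJ φ (fun _ => 0 : ∀ n, X n) S hS = 0 := by
  unfold rhoJ rho2
  rw [sigma2_zero_on φ S (fun n _ => rfl)]
  simp

lemma rhoJ_sum_le {κ : Type*} (s : Finset κ) (x : κ → ∀ n, X n) (S : Finset ℕ)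
    (hS : S.Nonempty) :
    rhoJ φ (fun n => ∑ j ∈ s, x j n) S hS ≤ ∑ j ∈ s, rhoJ φ (x j) S hS := by
  classical
  induction s using Finset.cons_induction with
  | empty => simp [rhoJ_zero]
  | cons j s hj ih =>
    rw [Finset.sum_cons]
    calc rhoJ φ (fun n => ∑ k ∈ Finset.cons j s hj, x k n) S hS
        = rhoJ φ (fun n => x j n + ∑ k ∈ s, x k n) S hS := by
          congr 1; funext n; rw [Finset.sum_cons]
      _ ≤ rhoJ φ (x j) S hS + rhoJ φ (fun n => ∑ k ∈ s, x k n) S hS :=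
          rhoJ_add_le φ _ _ S hS
      _ ≤ rhoJ φ (x j) S hS + ∑ k ∈ s, rhoJ φ (x k) S hS := by linarith
end Lemmas4
section Lemmas5
variable {X : ℕ → Type*} [∀ n, NormedAddCommGroup (X n)] [∀ n, NormedSpace ℝ (X n)]
  (φ : ∀ n, X n →L[ℝ] X (n + 1))

open Classical in
noncomputable def Afun (x : ∀ n, X n) (T : Finset ℕ) : ℝ :=
  sigma2 φ x T + (if h : T.Nonempty then ‖x (T.min' h)‖ ^ 2 else 0)

lemma Afun_nonneg (x : ∀ n, X n) (T : Finset ℕ) : 0 ≤ Afun φ x T := by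
  unfold Afun
  apply add_nonneg (sigma2_nonneg φ x T)
  split_ifs <;> positivity

lemma Afun_singleton (x : ∀ n, X n) (a : ℕ) : Afun φ x {a} = ‖x a‖ ^ 2 := by
  unfold Afun
  rw [sigma2_singleton, dif_pos (Finset.singleton_nonempty a), Finset.min'_singleton, zero_add]

lemma rho2_le_Afun (hφ : ∀ n, ‖φ n‖ ≤ 1) (x : ∀ n, X n) (I : Set ℕ) (hI : I.OrdConnected)
    (hsupp : ∀ n, n ∉ I → x n = 0) (hIne : I.Nonempty) (S : Finset ℕ) (hS : S.Nonempty) :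
    ∃ T1 T2 : Finset ℕ, ↑T1 ⊆ I ∧ T1.Nonempty ∧ ↑T2 ⊆ I ∧ T2.Nonempty ∧
      rho2 φ x S hS ≤ Afun φ x T1 + Afun φ x T2 := by
  classical
  set T := S.filter (· ∈ I) with hTdef
  have hTI : ↑T ⊆ I := by
    intro n hn
    simp only [hTdef, Finset.coe_filter, Set.mem_setOf_eq] at hn
    exact hn.2
  by_cases hT : T.Nonempty
  · set mn := T.min' hT with hmn
    set mx := T.max' hT with hmx
    have hmnT : mn ∈ T := T.min'_mem hT
    have hmxT : mx ∈ T := T.max'_mem hT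
    have hmnI : mn ∈ I := hTI hmnT
    have hmxI : mx ∈ I := hTI hmxT
    set L := S.filter (· < mn) with hL
    set H := S.filter (mx < ·) with hH
    have hmem : ∀ s ∈ S, s ∈ L ∨ s ∈ T ∨ s ∈ H := by
      intro s hs
      rcases lt_or_ge s mn with h1 | h1
      · exact Or.inl (Finset.mem_filter.mpr ⟨hs, h1⟩)
      rcases le_or_gt s mx with h2 | h2
      · exact Or.inr (Or.inl (Finset.mem_filter.mpr ⟨hs, hI.out hmnI hmxI ⟨h1, h2⟩⟩))
      · exact Or.inr (Or.inr (Finset.mem_filter.mpr ⟨hs, h2⟩))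
    have hxL : ∀ n ∈ L, x n = 0 := by
      intro n hn
      have hnS := (Finset.mem_filter.mp hn).1
      have hnlt := (Finset.mem_filter.mp hn).2
      apply hsupp
      intro hnI
      exact absurd (T.min'_le n (Finset.mem_filter.mpr ⟨hnS, hnI⟩)) (not_le.mpr hnlt)
    have hxH : ∀ n ∈ H, x n = 0 := by
      intro n hn
      have hnS := (Finset.mem_filter.mp hn).1
      have hnlt := (Finset.mem_filter.mp hn).2
      apply hsupp
      intro hnI
      exact absurd (T.le_max' n (Finset.mem_filter.mpr ⟨hnS, hnI⟩)) (not_le.mpr hnlt)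
    have hLT : ∀ a ∈ L, ∀ b ∈ T, a < b := by
      intro a ha b hb
      exact lt_of_lt_of_le (Finset.mem_filter.mp ha).2 (T.min'_le b hb)
    have hTsub : T ⊆ S := Finset.filter_subset _ _
    have hLsub : L ⊆ S := Finset.filter_subset _ _
    have hHsub : H ⊆ S := Finset.filter_subset _ _
    -- sigma2 of L ∪ T
    have hsigLT : sigma2 φ x (L ∪ T) ≤ sigma2 φ x T + ‖x mn‖ ^ 2 := by
      by_cases hLne : L.Nonempty
      · rw [sigma2_union φ x L T hLne hT hLT]
        rw [sigma2_zero_on φ L hxL, hxL _ (L.max'_mem hLne), map_zero, zero_sub, norm_neg]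
        simp [← hmn]
        exact le_rfl
      · rw [Finset.not_nonempty_iff_eq_empty.mp hLne, Finset.empty_union]
        nlinarith [sq_nonneg ‖x mn‖]
    have hAfunT : Afun φ x T = sigma2 φ x T + ‖x mn‖ ^ 2 := by
      unfold Afun; rw [dif_pos hT]
    have hmxsub : ↑({mx} : Finset ℕ) ⊆ I := by simpa using hmxI
    refine ⟨T, {mx}, hTI, hT, hmxsub, Finset.singleton_nonempty mx, ?_⟩
    rw [Afun_singleton, hAfunT]
    by_cases hHne : H.Nonempty
    · -- S = (L ∪ T) ∪ H
      have hSeq : S = (L ∪ T) ∪ H := by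
        apply Finset.ext
        intro s
        constructor
        · intro hs
          rcases hmem s hs with h | h | h
          · exact Finset.mem_union_left _ (Finset.mem_union_left _ h)
          · exact Finset.mem_union_left _ (Finset.mem_union_right _ h)
          · exact Finset.mem_union_right _ h
        · intro hs
          rcases Finset.mem_union.mp hs with h | h
          · rcases Finset.mem_union.mp h with h | h
            exacts [hLsub h, hTsub h]
          · exact hHsub h
      have hLTne : (L ∪ T).Nonempty := ⟨mn, Finset.mem_union_right _ hmnT⟩
      have hLTH : ∀ a ∈ L ∪ T, ∀ b ∈ H, a < b := by
        intro a ha b hb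
        have hbmx : mx < b := (Finset.mem_filter.mp hb).2
        rcases Finset.mem_union.mp ha with h | h
        · exact lt_trans (lt_of_lt_of_le (Finset.mem_filter.mp h).2 (T.min'_le mx hmxT)) hbmx
        · exact lt_of_le_of_lt (T.le_max' a h) hbmx
      have hmaxLT : (L ∪ T).max' hLTne = mx := by
        apply le_antisymm
        · apply Finset.max'_le
          intro a ha
          rcases Finset.mem_union.mp ha with h | h
          · exact le_of_lt (lt_of_lt_of_le (Finset.mem_filter.mp h).2 (T.min'_le mx hmxT))
          · exact T.le_max' a h
        · exact Finset.le_max' _ mx (Finset.mem_union_right _ hmxT)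
      have hcross : ‖phiTo φ ((L ∪ T).max' hLTne) (H.min' hHne) (x ((L ∪ T).max' hLTne))
          - x (H.min' hHne)‖ ^ 2 ≤ ‖x mx‖ ^ 2 := by
        rw [hmaxLT, hxH _ (H.min'_mem hHne), sub_zero]
        exact pow_le_pow_left₀ (norm_nonneg _) (phiTo_norm_le φ hφ mx _ (x mx)) 2
      have hsigS : sigma2 φ x S ≤ sigma2 φ x T + ‖x mn‖ ^ 2 + ‖x mx‖ ^ 2 := by
        rw [hSeq, sigma2_union φ x (L ∪ T) H hLTne hHne hLTH, sigma2_zero_on φ H hxH]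
        linarith
      have hSmaxH : S.max' hS ∈ H := by
        have hmaxS : S.max' hS ∈ S := S.max'_mem hS
        rcases hmem _ hmaxS with h | h | h
        · exact absurd (hLTH _ (Finset.mem_union_left _ h) _ (Finset.mem_filter.mpr
            ⟨hHsub (H.min'_mem hHne), (Finset.mem_filter.mp (H.min'_mem hHne)).2⟩))
            (not_lt.mpr (S.le_max' _ (hHsub (H.min'_mem hHne))))
        · exact absurd (hLTH _ (Finset.mem_union_right _ h) _ (H.min'_mem hHne))
            (not_lt.mpr (S.le_max' _ (hHsub (H.min'_mem hHne))))
        · exact h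
      unfold rho2
      rw [hxH _ hSmaxH]
      simp only [norm_zero]
      nlinarith
    · -- H empty
      have hHe : H = ∅ := Finset.not_nonempty_iff_eq_empty.mp hHne
      have hSeq2 : S = L ∪ T := by
        apply Finset.ext
        intro s
        constructor
        · intro hs
          rcases hmem s hs with h | h | h
          · exact Finset.mem_union_left _ h
          · exact Finset.mem_union_right _ h
          · rw [hHe] at h; exact absurd h (Finset.notMem_empty s)
        · intro hs
          rcases Finset.mem_union.mp hs with h | h
          exacts [hLsub h, hTsub h]
      have hmaxS : S.max' hS = mx := by
        apply le_antisymm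
        · apply Finset.max'_le
          intro s hs
          rw [hSeq2] at hs
          rcases Finset.mem_union.mp hs with h | h
          · exact le_of_lt (lt_of_lt_of_le (Finset.mem_filter.mp h).2 (T.min'_le mx hmxT))
          · exact T.le_max' s h
        · exact S.le_max' mx (hTsub hmxT)
      unfold rho2
      rw [hmaxS]
      have hsigS : sigma2 φ x S ≤ sigma2 φ x T + ‖x mn‖ ^ 2 := by
        rw [hSeq2]; exact hsigLT
      linarith
  · -- T empty : x vanishes on S
    obtain ⟨n₀, hn₀⟩ := hIne
    have hsub : ↑({n₀} : Finset ℕ) ⊆ I := by simpa using hn₀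
    refine ⟨{n₀}, {n₀}, hsub, Finset.singleton_nonempty _,
      hsub, Finset.singleton_nonempty _, ?_⟩
    have hx0 : ∀ n ∈ S, x n = 0 := by
      intro n hn
      apply hsupp
      intro hnI
      exact hT ⟨n, Finset.mem_filter.mpr ⟨hn, hnI⟩⟩
    unfold rho2
    rw [sigma2_zero_on φ S hx0, hx0 _ (S.max'_mem hS)]
    simp only [norm_zero, zero_add]
    have := Afun_nonneg φ x {n₀}
    nlinarith
end Lemmas5
section Lemmas6
variable {X : ℕ → Type*} [∀ n, NormedAddCommGroup (X n)] [∀ n, NormedSpace ℝ (X n)]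
  (φ : ∀ n, X n →L[ℝ] X (n + 1))

lemma sigma2_empty (x : ∀ n, X n) : sigma2 φ x ∅ = 0 := by simp [sigma2]

lemma mem_foldr_union (l : List (Finset ℕ)) (a : ℕ) :
    a ∈ l.foldr (· ∪ ·) ∅ ↔ ∃ t ∈ l, a ∈ t := by
  induction l with
  | nil => simp
  | cons B l ih => simp [ih]

lemma sigma2_foldr_ge (x : ∀ n, X n) (l : List (Finset ℕ)) (hne : ∀ B ∈ l, B.Nonempty)
    (hord : l.Pairwise (fun A B => ∀ a ∈ A, ∀ b ∈ B, a < b)) :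
    (l.map (sigma2 φ x)).sum ≤ sigma2 φ x (l.foldr (· ∪ ·) ∅) := by
  induction l with
  | nil => simp [sigma2_empty]
  | cons B l ih =>
    simp only [List.map_cons, List.sum_cons, List.foldr_cons]
    rcases l with _ | ⟨C, l'⟩
    · simp only [List.map_nil, List.sum_nil, List.foldr_nil, add_zero, Finset.union_empty]
      exact le_refl _
    · set rest := (C :: l').foldr (· ∪ ·) ∅ with hrest
      have hBne : B.Nonempty := hne B (List.mem_cons_self)
      have hrestne : rest.Nonempty := by
        obtain ⟨c, hc⟩ := hne C (List.mem_cons_of_mem _ (List.mem_cons_self))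
        exact ⟨c, (mem_foldr_union _ c).mpr ⟨C, List.mem_cons_self, hc⟩⟩
      have hord' : ∀ a ∈ B, ∀ b ∈ rest, a < b := by
        intro a ha b hb
        obtain ⟨t, ht, hbt⟩ := (mem_foldr_union _ b).mp hb
        exact (List.pairwise_cons.mp hord).1 t ht a ha b hbt
      rw [sigma2_union φ x B rest hBne hrestne hord']
      have hih := ih (fun B' hB' => hne B' (List.mem_cons_of_mem _ hB'))
        (List.pairwise_cons.mp hord).2
      -- already folded
      nlinarith [sq_nonneg ‖phiTo φ (B.max' hBne) (rest.min' hrestne) (x (B.max' hBne)) -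
        x (rest.min' hrestne)‖]
end Lemmas6
/-- lower 2-estimate. If `I_1 ≪ I_2 ≪ ⋯ ≪ I_m` are nonempty intervals
(consecutive ones separated by a gap of at least one integer) and `x_j` is supported
in `I_j`, then `2 ‖Σ x_j‖_J² ≥ Σ ‖x_j‖_J²`. -/
theorem stmt9 {X : ℕ → Type*} [∀ n, NormedAddCommGroup (X n)] [∀ n, NormedSpace ℝ (X n)]
    [∀ n, CompleteSpace (X n)] [Subsingleton (X 0)]
    (φ : ∀ n, X n →L[ℝ] X (n + 1)) (hφ : ∀ n, ‖φ n‖ ≤ 1)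
    (m : ℕ) (I : Fin m → Set ℕ) (hI : ∀ j, (I j).OrdConnected)
    (hne : ∀ j, (I j).Nonempty)
    (hskip : ∀ (j : Fin m) (h : (j : ℕ) + 1 < m),
      ∀ a ∈ I j, ∀ b ∈ I ⟨(j : ℕ) + 1, h⟩, a + 2 ≤ b)
    (x : Fin m → ∀ n, X n) (hsupp : ∀ j n, n ∉ I j → x j n = 0)
    (hmem : ∀ j, memJhat φ (x j)) :
    2 * normJ φ (∑ j, x j) ^ 2 ≥ ∑ j, normJ φ (x j) ^ 2 := by
  classical
  rcases Nat.eq_zero_or_pos m with hm | hm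
  · subst hm
    simp only [Finset.univ_eq_empty, Finset.sum_empty]
    positivity
  set y : ∀ n, X n := ∑ j, x j with hy
  have hyfun : y = fun n => ∑ j, x j n := by
    funext n; rw [hy]; exact Finset.sum_apply n Finset.univ x
  set M : Fin m → ℝ := fun j => sSup (rhoSet φ (x j)) with hM
  have hMj : ∀ j, M j = sSup (rhoSet φ (x j)) := fun j => by rw [hM]
  have hmemrho : ∀ (z : ∀ n, X n) (S : Finset ℕ) (hS : S.Nonempty),
      rhoJ φ z S hS ∈ rhoSet φ z := fun z S hS => ⟨S, hS, rfl⟩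
  have hRne : ∀ z : ∀ n, X n, (rhoSet φ z).Nonempty := fun z =>
    ⟨rhoJ φ z {0} (Finset.singleton_nonempty 0), hmemrho z {0} _⟩
  have hMnn : ∀ j, 0 ≤ M j := by
    intro j
    rw [hMj]
    exact le_trans (rhoJ_nonneg φ (x j) {0} (Finset.singleton_nonempty 0))
      (le_csSup (hmem j) (hmemrho (x j) {0} _))
  have hBdd : BddAbove (rhoSet φ y) := by
    refine ⟨∑ j, M j, ?_⟩
    rintro r ⟨S, hS, rfl⟩
    have h1 : rhoJ φ y S hS ≤ ∑ j, rhoJ φ (x j) S hS := by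
      rw [hyfun]; exact rhoJ_sum_le φ Finset.univ x S hS
    refine le_trans h1 (Finset.sum_le_sum fun j _ => ?_)
    rw [hMj]
    exact le_csSup (hmem j) (hmemrho (x j) S hS)
  set s := sSup (rhoSet φ y) with hs
  have hsnn : 0 ≤ s := le_trans (rhoJ_nonneg φ y {0} (Finset.singleton_nonempty 0))
    (le_csSup hBdd (hmemrho y {0} _))
  have hgoal : ∀ j, normJ φ (x j) ^ 2 = (1/2) * M j ^ 2 := by
    intro j
    unfold normJ
    rw [← hMj, mul_pow, inv_pow, Real.sq_sqrt (by norm_num : (0:ℝ) ≤ 2)]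
    ring
  suffices hkey : ∑ j, (1/2) * M j ^ 2 ≤ s ^ 2 by
    have h2 : 2 * normJ φ y ^ 2 = s ^ 2 := by
      unfold normJ
      rw [← hs, mul_pow, inv_pow, Real.sq_sqrt (by norm_num : (0:ℝ) ≤ 2)]
      ring
    calc ∑ j, normJ φ (x j) ^ 2 = ∑ j, (1/2) * M j ^ 2 :=
          Finset.sum_congr rfl fun j _ => hgoal j
      _ ≤ s ^ 2 := hkey
      _ = 2 * normJ φ y ^ 2 := h2.symm
  apply le_of_forall_pos_le_add
  intro ε hε
  set ε' := ε / m with hε'def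
  have hε' : 0 < ε' := div_pos hε (by exact_mod_cast hm)
  have claim : ∀ j, ∃ Tj : Finset ℕ, ↑Tj ⊆ I j ∧ Tj.Nonempty ∧
      (1/2) * M j ^ 2 - ε' ≤ Afun φ (x j) Tj := by
    intro j
    rcases eq_or_lt_of_le (hMnn j) with hM0 | hMpos
    · obtain ⟨n₀, hn₀⟩ := hne j
      refine ⟨{n₀}, by simpa using hn₀, Finset.singleton_nonempty _, ?_⟩
      have := Afun_nonneg φ (x j) {n₀}
      rw [← hM0]
      nlinarith
    · set δ := min (ε' / M j) (M j) with hδ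
      have hδpos : 0 < δ := lt_min (div_pos hε' hMpos) hMpos
      have hlt : M j - δ < sSup (rhoSet φ (x j)) := by rw [← hMj]; linarith
      obtain ⟨r, hrmem, hrlt⟩ := exists_lt_of_lt_csSup (hRne (x j)) hlt
      obtain ⟨S, hS, rfl⟩ := hrmem
      have h1 : 0 ≤ M j - δ := by
        have := min_le_right (ε' / M j) (M j); rw [← hδ] at this; linarith
      have h2 : δ * M j ≤ ε' := by
        have := min_le_left (ε' / M j) (M j); rw [← hδ] at this
        calc δ * M j ≤ (ε' / M j) * M j := by
              apply mul_le_mul_of_nonneg_right this (le_of_lt hMpos)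
          _ = ε' := by field_simp
      have h3 : (M j - δ) ^ 2 ≤ rhoJ φ (x j) S hS ^ 2 :=
        pow_le_pow_left₀ h1 hrlt.le 2
      have hr2 : M j ^ 2 - 2 * ε' ≤ rhoJ φ (x j) S hS ^ 2 := by nlinarith
      have hrho2 : rhoJ φ (x j) S hS ^ 2 = rho2 φ (x j) S hS :=
        Real.sq_sqrt (rho2_nonneg φ (x j) S hS)
      obtain ⟨T1, T2, hT1I, hT1ne, hT2I, hT2ne, hle⟩ :=
        rho2_le_Afun φ hφ (x j) (I j) (hI j) (fun n hn => hsupp j n hn) (hne j) S hS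
      rcases le_or_gt ((1/2) * M j ^ 2 - ε') (Afun φ (x j) T1) with h | h
      · exact ⟨T1, hT1I, hT1ne, h⟩
      · refine ⟨T2, hT2I, hT2ne, ?_⟩
        nlinarith
  choose T hTsub hTne hTA using claim
  have F1 : ∀ (t : ℕ) (ht : t < m) (j : Fin m), (j : ℕ) < t →
      ∀ a ∈ I j, ∀ c ∈ I ⟨t, ht⟩, a + 2 ≤ c := by
    intro t
    induction t with
    | zero => intro ht j hj; omega
    | succ t ihp =>
      intro ht j hj a ha c hc
      by_cases hcase : (j : ℕ) = t
      · have hj1 : (j : ℕ) + 1 < m := by omega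
        have hfin : (⟨(j : ℕ) + 1, hj1⟩ : Fin m) = ⟨t + 1, ht⟩ := by
          apply Fin.ext
          show (j : ℕ) + 1 = t + 1
          omega
        exact hskip j hj1 a ha c (by rw [hfin]; exact hc)
      · have hjt : (j : ℕ) < t := by omega
        have htm : t < m := by omega
        obtain ⟨e, he⟩ := hne ⟨t, htm⟩
        have h1 := ihp htm j hjt a ha e he
        have hj2 : ((⟨t, htm⟩ : Fin m) : ℕ) + 1 < m := ht
        have h2 := hskip ⟨t, htm⟩ hj2 e he c hc
        omega
  have F1' : ∀ j k : Fin m, j < k → ∀ a ∈ I j, ∀ c ∈ I k, a + 2 ≤ c := by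
    intro j k hjk a ha c hc
    exact F1 k k.isLt j hjk a ha c hc
  have hIdisj : ∀ j k : Fin m, j ≠ k → ∀ n, n ∈ I j → n ∈ I k → False := by
    intro j k hne' n hj hk
    rcases lt_or_gt_of_ne hne' with h | h
    · have := F1' j k h n hj n hk; omega
    · have := F1' k j h n hk n hj; omega
  set b : Fin m → ℕ := fun j => sInf (I j) - 1 with hb
  have hbj : ∀ j, b j = sInf (I j) - 1 := fun j => by rw [hb]
  have hsInfmem : ∀ j, sInf (I j) ∈ I j := fun j => Nat.sInf_mem (hne j)
  have hyb : ∀ j : Fin m, y (b j) = 0 := by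
    intro j
    by_cases h0 : sInf (I j) = 0
    · have hb0 : b j = 0 := by rw [hbj j, h0]
      rw [hb0]
      exact Subsingleton.elim _ _
    · have hnot : ∀ k, b j ∉ I k := by
        intro k hk
        rcases lt_trichotomy k j with h | h | h
        · have := F1' k j h (b j) hk (sInf (I j)) (hsInfmem j)
          have h2 := hbj j; omega
        · subst h
          have := Nat.sInf_le hk
          have h2 := hbj k; omega
        · have := F1' j k h (sInf (I j)) (hsInfmem j) (b j) hk
          have h2 := hbj j; omega
      have h1 : y (b j) = ∑ k, x k (b j) := by rw [hyfun]
      rw [h1]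
      exact Finset.sum_eq_zero fun k _ => hsupp k _ (hnot k)
  have hyT : ∀ j : Fin m, ∀ n ∈ T j, y n = x j n := by
    intro j n hn
    have hnI : n ∈ I j := hTsub j hn
    have h1 : y n = ∑ k, x k n := by rw [hyfun]
    rw [h1, Finset.sum_eq_single j]
    · intro k _ hkj
      exact hsupp k n fun hnk => hIdisj k j hkj n hnk hnI
    · intro h; exact absurd (Finset.mem_univ j) h
  set Bs : Fin m → Finset ℕ := fun j => insert (b j) (T j) with hBs
  have hBsj : ∀ j, Bs j = insert (b j) (T j) := fun j => by rw [hBs]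
  have hBsne : ∀ j, (Bs j).Nonempty := fun j => by rw [hBsj]; exact Finset.insert_nonempty _ _
  have hbound : ∀ j k : Fin m, j < k → ∀ a ∈ Bs j, ∀ c ∈ Bs k, a < c := by
    intro j k hjk a ha c hc
    rw [hBsj] at ha hc
    have haux1 : sInf (I j) + 2 ≤ sInf (I k) :=
      le_csInf (hne k) fun c' hc' => F1' j k hjk _ (hsInfmem j) c' hc'
    have hbjj := hbj j
    have hbkk := hbj k
    have hC : c = sInf (I k) - 1 ∨ sInf (I k) ≤ c := by
      rcases Finset.mem_insert.mp hc with h | h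
      · exact Or.inl (h.trans hbkk)
      · exact Or.inr (Nat.sInf_le (hTsub k h))
    rcases Finset.mem_insert.mp ha with h1 | h1
    · have ha' : a = sInf (I j) - 1 := h1.trans hbjj
      rcases hC with h2 | h2 <;> omega
    · have h3 : a + 2 ≤ sInf (I k) :=
        le_csInf (hne k) fun c' hc' => F1' j k hjk a (hTsub j h1) c' hc'
      rcases hC with h2 | h2 <;> omega
  set l : List (Finset ℕ) := (List.finRange m).map Bs with hl
  set S₀ : Finset ℕ := l.foldr (· ∪ ·) ∅ with hS₀def
  have hS₀mem : ∀ a, a ∈ S₀ ↔ ∃ j, a ∈ Bs j := by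
    intro a
    rw [hS₀def, mem_foldr_union]
    constructor
    · rintro ⟨t, ht, hat⟩
      obtain ⟨j, _, rfl⟩ := List.mem_map.mp ht
      exact ⟨j, hat⟩
    · rintro ⟨j, hj⟩
      exact ⟨Bs j, List.mem_map.mpr ⟨j, List.mem_finRange j, rfl⟩, hj⟩
  have hS₀ne : S₀.Nonempty :=
    ⟨b ⟨0, hm⟩, (hS₀mem _).mpr ⟨⟨0, hm⟩, by rw [hBsj]; exact Finset.mem_insert_self _ _⟩⟩
  have hchain : ∑ j, sigma2 φ y (Bs j) ≤ sigma2 φ y S₀ := by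
    have h1 := sigma2_foldr_ge φ y l
      (by
        intro B hB
        rw [hl] at hB
        obtain ⟨j, _, rfl⟩ := List.mem_map.mp hB
        exact hBsne j)
      (by
        rw [hl]
        rw [List.pairwise_map]
        exact (List.pairwise_lt_finRange m).imp fun {j k} hjk => hbound j k hjk)
    rw [hl, List.map_map] at h1
    rw [Fin.sum_univ_def]
    exact h1
  have hblock : ∀ j, Afun φ (x j) (T j) ≤ sigma2 φ y (Bs j) := by
    intro j
    by_cases hbT : b j ∈ T j
    · have hBeq : Bs j = T j := by rw [hBsj]; exact Finset.insert_eq_self.mpr hbT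
      have hbI : b j ∈ I j := hTsub j hbT
      have hsInf0 : sInf (I j) = 0 := by
        have h1 := Nat.sInf_le hbI
        have h2 := hbj j
        omega
      have hb0 : b j = 0 := by rw [hbj j, hsInf0]
      have hmin : (T j).min' (hTne j) = 0 :=
        Nat.eq_zero_of_le_zero (Finset.min'_le _ _ (hb0 ▸ hbT))
      have hx0 : x j 0 = 0 := Subsingleton.elim _ _
      have hsig : sigma2 φ y (T j) = sigma2 φ (x j) (T j) := sigma2_congr φ (T j) (hyT j)
      unfold Afun
      rw [dif_pos (hTne j), hmin, hx0, hBeq, hsig]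
      simp
    · have hblt : b j < (T j).min' (hTne j) := by
        have h1 : sInf (I j) ≤ (T j).min' (hTne j) :=
          Nat.sInf_le (hTsub j ((T j).min'_mem (hTne j)))
        have h2 := hbj j
        have h3 : b j ≠ (T j).min' (hTne j) := fun h => hbT (h ▸ (T j).min'_mem (hTne j))
        omega
      have hord : ∀ a ∈ ({b j} : Finset ℕ), ∀ c ∈ T j, a < c := by
        intro a ha c hc
        rw [Finset.mem_singleton.mp ha]
        exact lt_of_lt_of_le hblt (Finset.min'_le _ c hc)
      have hBeq : Bs j = {b j} ∪ T j := by rw [hBsj, Finset.insert_eq]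
      rw [hBeq, sigma2_union φ y {b j} (T j) (Finset.singleton_nonempty _) (hTne j) hord]
      rw [sigma2_singleton, Finset.max'_singleton, hyb j, map_zero, zero_sub, norm_neg]
      rw [sigma2_congr φ (T j) (hyT j), hyT j _ ((T j).min'_mem (hTne j))]
      unfold Afun
      rw [dif_pos (hTne j)]
      linarith
  have hrho : ∑ j, ((1/2) * M j ^ 2 - ε') ≤ rho2 φ y S₀ hS₀ne := by
    calc ∑ j, ((1/2) * M j ^ 2 - ε') ≤ ∑ j, Afun φ (x j) (T j) :=
          Finset.sum_le_sum fun j _ => hTA j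
      _ ≤ ∑ j, sigma2 φ y (Bs j) := Finset.sum_le_sum fun j _ => hblock j
      _ ≤ sigma2 φ y S₀ := hchain
      _ ≤ rho2 φ y S₀ hS₀ne := by
          unfold rho2
          nlinarith [sq_nonneg ‖y (S₀.max' hS₀ne)‖]
  have hsS : rhoJ φ y S₀ hS₀ne ≤ s := le_csSup hBdd (hmemrho y S₀ hS₀ne)
  have hsq : rho2 φ y S₀ hS₀ne ≤ s ^ 2 := by
    have h1 : rhoJ φ y S₀ hS₀ne ^ 2 = rho2 φ y S₀ hS₀ne :=
      Real.sq_sqrt (rho2_nonneg φ y S₀ hS₀ne)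
    have h2 : rhoJ φ y S₀ hS₀ne ^ 2 ≤ s ^ 2 :=
      pow_le_pow_left₀ (rhoJ_nonneg φ y S₀ hS₀ne) hsS 2
    linarith
  have hsum : ∑ j, ((1/2) * M j ^ 2 - ε') = (∑ j, (1/2) * M j ^ 2) - ε := by
    rw [Finset.sum_sub_distrib, Finset.sum_const, Finset.card_univ, Fintype.card_fin]
    congr 1
    rw [nsmul_eq_mul, hε'def]
    field_simp
  linarith
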